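/- A finite-index subgroup of a group with Property FW also has Property FW. -/

import Mathlib

open Pointwise

/-- A group `Γ` has Property FW if for every `Γ`-set `E` and every subset `X ⊆ E`
such that the symmetric difference `X △ γX` is finite for every `γ ∈ Γ`, there exists
a `Γ`-invariant subset `Y ⊆ E` with `X △ Y` finite. -/
def HasPropertyFW (Γ : Type*) [Group Γ] : Prop :=
  ∀ (E : Type) [MulAction Γ E] (X : Set E),
    (∀ γ : Γ, (symmDiff X (γ • X)).Finite) →
    ∃ Y : Set E, (∀ γ : Γ, γ • Y = Y) ∧ (symmDiff X Y).Finite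

namespace FWAux

variable {Γ : Type*} [Group Γ] (H : Subgroup Γ)

/-- The cocycle associated to the induced action. -/
noncomputable def coc (γ : Γ) (c : Γ ⧸ H) : H :=
  ⟨(γ • c).out⁻¹ * γ * c.out, by
    have h : ((γ • c).out : Γ ⧸ H) = ((γ * c.out : Γ) : Γ ⧸ H) := by
      rw [QuotientGroup.out_eq']
      conv_lhs => rw [← QuotientGroup.out_eq' c]
      rfl
    have h2 := QuotientGroup.eq.mp h
    rwa [← mul_assoc] at h2⟩

lemma coc_coe (γ : Γ) (c : Γ ⧸ H) : (coc H γ c : Γ) = (γ • c).out⁻¹ * γ * c.out := rfl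

lemma coc_one (c : Γ ⧸ H) : coc H 1 c = 1 := by
  apply Subtype.ext
  rw [coc_coe, one_smul]
  simp

lemma coc_mul (γ δ : Γ) (c : Γ ⧸ H) : coc H (γ * δ) c = coc H γ (δ • c) * coc H δ c := by
  apply Subtype.ext
  push_cast
  rw [coc_coe, coc_coe, coc_coe, mul_smul]
  group

variable {Q : Type} (e : Q ≃ Γ ⧸ H) (E : Type) [MulAction H E]

/-- The induced `Γ`-action on `Q × E`. -/
noncomputable def indAction : MulAction Γ (Q × E) where
  smul γ p := (e.symm (γ • e p.1), coc H γ (e p.1) • p.2)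
  one_smul p := by
    show (e.symm (1 • e p.1), coc H 1 (e p.1) • p.2) = p
    rw [one_smul, coc_one, one_smul, Equiv.symm_apply_apply]
  mul_smul γ δ p := by
    show (e.symm ((γ * δ) • e p.1), coc H (γ * δ) (e p.1) • p.2)
      = (e.symm (γ • e (e.symm (δ • e p.1))), coc H γ (e (e.symm (δ • e p.1))) • coc H δ (e p.1) • p.2)
    rw [Equiv.apply_symm_apply, mul_smul, coc_mul, mul_smul]

end FWAux

/-- A finite-index subgroup of a group with Property FW also has Property FW. -/
theorem stmt_1 {Γ : Type*} [Group Γ] (hfw : HasPropertyFW Γ)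
    (H : Subgroup Γ) (hfi : H.FiniteIndex) :
    HasPropertyFW H := by
  intro E _ X hX
  -- a `Type 0` copy of `Γ ⧸ H`
  have hfin : Finite (Γ ⧸ H) := Subgroup.finite_quotient_of_finiteIndex (H := H)
  obtain ⟨n, ⟨eqv⟩⟩ := Finite.exists_equiv_fin (Γ ⧸ H)
  have e : Fin n ≃ Γ ⧸ H := eqv.symm
  letI inst := FWAux.indAction H e E
  -- the induced almost-invariant set
  have hsmul : ∀ (γ : Γ) (p : Fin n × E),
      γ • p = (e.symm (γ • e p.1), FWAux.coc H γ (e p.1) • p.2) := fun γ p => rfl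
  have hXcomm : ∀ γ : Γ, (symmDiff {p : Fin n × E | p.2 ∈ X} (γ • {p : Fin n × E | p.2 ∈ X})).Finite := by
    intro γ
    have hsub : symmDiff {p : Fin n × E | p.2 ∈ X} (γ • {p : Fin n × E | p.2 ∈ X}) ⊆
        ⋃ q : Fin n, Prod.mk q '' (symmDiff X ((FWAux.coc H γ⁻¹ (e q))⁻¹ • X)) := by
      intro p hp
      rw [Set.mem_symmDiff] at hp
      have h2 : p ∈ γ • {p : Fin n × E | p.2 ∈ X} ↔ FWAux.coc H γ⁻¹ (e p.1) • p.2 ∈ X := by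
        rw [Set.mem_smul_set_iff_inv_smul_mem]
        exact Iff.rfl
      have h3 : p.2 ∈ (FWAux.coc H γ⁻¹ (e p.1))⁻¹ • X ↔ FWAux.coc H γ⁻¹ (e p.1) • p.2 ∈ X := by
        rw [Set.mem_smul_set_iff_inv_smul_mem, inv_inv]
      refine Set.mem_iUnion.mpr ⟨p.1, p.2, ?_, rfl⟩
      rw [Set.mem_symmDiff]
      rw [h2] at hp
      simp only [h3]
      exact hp
    refine Set.Finite.subset (Set.finite_iUnion fun q => ?_) hsub
    exact Set.Finite.image _ (hX (FWAux.coc H γ⁻¹ (e q))⁻¹)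
  obtain ⟨Ys, hYinv, hYfin⟩ := hfw (Fin n × E) {p : Fin n × E | p.2 ∈ X} hXcomm
  -- restrict to the fiber over the trivial coset
  have heq₀ : e (e.symm ((1 : Γ) : Γ ⧸ H)) = ((1 : Γ) : Γ ⧸ H) := e.apply_symm_apply _
  have hr : (((1 : Γ) : Γ ⧸ H)).out ∈ H := by
    have h := QuotientGroup.out_eq' (((1 : Γ) : Γ ⧸ H))
    have h2 := QuotientGroup.eq.mp h.symm
    simpa using h2
  have key : ∀ (h : H) (x : E), (e.symm ((1 : Γ) : Γ ⧸ H), x) ∈ Ys →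
      (e.symm ((1 : Γ) : Γ ⧸ H), h • x) ∈ Ys := by
    intro h x hx
    set r : H := ⟨(((1 : Γ) : Γ ⧸ H)).out, hr⟩ with hrdef
    set g : H := r * h * r⁻¹ with hg
    have hg1 : (g : Γ) • (((1 : Γ) : Γ ⧸ H)) = ((1 : Γ) : Γ ⧸ H) := by
      conv_lhs => rw [← QuotientGroup.out_eq' (((1 : Γ) : Γ ⧸ H))]
      show (((g : Γ) * (((1 : Γ) : Γ ⧸ H)).out : Γ) : Γ ⧸ H) = _
      rw [QuotientGroup.eq]
      exact H.mul_mem (H.inv_mem (H.mul_mem g.2 hr)) H.one_mem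
    have hcoc : FWAux.coc H (g : Γ) (((1 : Γ) : Γ ⧸ H)) = h := by
      apply Subtype.ext
      rw [FWAux.coc_coe, hg1]
      show ((((1 : Γ) : Γ ⧸ H)).out)⁻¹ * ((r : Γ) * (h : Γ) * (r : Γ)⁻¹) * (((1 : Γ) : Γ ⧸ H)).out
        = (h : Γ)
      rw [hrdef]
      group
    have hmem : (g : Γ) • ((e.symm ((1 : Γ) : Γ ⧸ H), x) : Fin n × E) ∈ Ys := by
      rw [← hYinv (g : Γ)]
      exact Set.smul_mem_smul_set hx
    rw [hsmul] at hmem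
    rw [heq₀] at hmem
    rw [hg1, hcoc] at hmem
    exact hmem
  refine ⟨{x | (e.symm ((1 : Γ) : Γ ⧸ H), x) ∈ Ys}, fun h => ?_, ?_⟩
  · apply subset_antisymm
    · rintro x ⟨y, hy, rfl⟩
      exact key h y hy
    · intro x hx
      exact ⟨h⁻¹ • x, key h⁻¹ x hx, by show h • h⁻¹ • x = x; rw [smul_inv_smul]⟩
  · have heeq : symmDiff X {x | (e.symm ((1 : Γ) : Γ ⧸ H), x) ∈ Ys}
        = Prod.mk (e.symm ((1 : Γ) : Γ ⧸ H)) ⁻¹' (symmDiff {p : Fin n × E | p.2 ∈ X} Ys) := by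
      ext x
      simp only [Set.mem_preimage, Set.mem_symmDiff]
      rfl
    rw [heeq]
    exact hYfin.preimage (fun a _ b _ hab => congrArg Prod.snd hab)
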